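/- If f : {-1,1}^n → ℝ can be computed by a decision tree of depth d, then every Fourier coefficient f̂(S) with |S| > d is zero. -/
import Mathlib

noncomputable def chi {n : ℕ} (S : Finset (Fin n)) (x : Fin n → Bool) : ℝ :=
  ∏ i ∈ S, (if x i then 1 else -1)

noncomputable def fourierCoef {n : ℕ} (f : (Fin n → Bool) → ℝ) (S : Finset (Fin n)) : ℝ :=
  (∑ x : Fin n → Bool, f x * chi S x) / 2 ^ n

/-- Decision trees over n Boolean variables with real-valued leaves. -/
inductive DTree (n : ℕ) where
  | leaf : ℝ → DTree n
  | node : Fin n → DTree n → DTree n → DTree n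

noncomputable def DTree.eval {n : ℕ} : DTree n → (Fin n → Bool) → ℝ
  | .leaf r, _ => r
  | .node i t f, x => if x i then t.eval x else f.eval x

def DTree.depth {n : ℕ} : DTree n → ℕ
  | .leaf _ => 0
  | .node _ t f => max t.depth f.depth + 1

-- auxiliary
def DTree.restrict {n : ℕ} (i : Fin n) (b : Bool) : DTree n → DTree n
  | .leaf r => .leaf r
  | .node j t f =>
      if j = i then (if b then t.restrict i b else f.restrict i b)
      else .node j (t.restrict i b) (f.restrict i b)

lemma DTree.restrict_depth {n : ℕ} (i : Fin n) (b : Bool) (T : DTree n) :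
    (T.restrict i b).depth ≤ T.depth := by
  induction T with
  | leaf r => simp [restrict, depth]
  | node j t f ht hf =>
      simp only [restrict]
      split
      · split
        · exact le_trans ht (by simp [depth]; omega)
        · exact le_trans hf (by simp [depth]; omega)
      · simp [depth]; omega

lemma DTree.restrict_eval {n : ℕ} (i : Fin n) (b : Bool) (T : DTree n)
    (x : Fin n → Bool) :
    (T.restrict i b).eval x = T.eval (Function.update x i b) := by
  induction T with
  | leaf r => simp [restrict, eval]
  | node j t f ht hf =>
      simp only [restrict]
      split
      · subst ‹j = i›
        cases b <;> simp [eval, ht, hf]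
      · simp [eval, Function.update_of_ne ‹j ≠ i›, ht, hf]

lemma chi_update_notMem {n : ℕ} {S : Finset (Fin n)} {i : Fin n} (h : i ∉ S)
    (x : Fin n → Bool) (b : Bool) : chi S (Function.update x i b) = chi S x := by
  refine Finset.prod_congr rfl fun j hj => ?_
  rw [Function.update_of_ne (by rintro rfl; exact h hj)]

lemma chi_erase {n : ℕ} {S : Finset (Fin n)} {i : Fin n} (h : i ∈ S)
    (x : Fin n → Bool) :
    chi S x = (if x i then 1 else -1) * chi (S.erase i) x :=
  (Finset.mul_prod_erase S _ h).symm

lemma sum_chi {n : ℕ} {S : Finset (Fin n)} (h : S.Nonempty) :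
    ∑ x : Fin n → Bool, chi S x = 0 := by
  obtain ⟨i, hi⟩ := h
  have hinv : Function.Involutive (fun x : Fin n → Bool => Function.update x i (!x i)) := by
    intro x
    funext j
    by_cases hj : j = i
    · subst hj; simp
    · simp [Function.update_of_ne hj]
  have := Equiv.sum_comp hinv.toPerm (fun x => chi S x)
  have hneg : ∀ x : Fin n → Bool, chi S (Function.update x i (!x i)) = -chi S x := by
    intro x
    rw [chi_erase hi, chi_erase hi x, chi_update_notMem (Finset.notMem_erase i S)]
    simp [Function.update_self]
    cases x i <;> simp <;> ring
  have h2 : (∑ x : Fin n → Bool, chi S x) = -∑ x : Fin n → Bool, chi S x := by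
    calc (∑ x : Fin n → Bool, chi S x)
        = ∑ x : Fin n → Bool, chi S (Function.update x i (!x i)) := this.symm
      _ = ∑ x : Fin n → Bool, -chi S x := by simp_rw [hneg]
      _ = -∑ x : Fin n → Bool, chi S x := by rw [Finset.sum_neg_distrib]
  linarith

lemma key {n : ℕ} : ∀ (D : ℕ) (T : DTree n), T.depth ≤ D →
    ∀ S : Finset (Fin n), D < S.card →
    ∑ x : Fin n → Bool, T.eval x * chi S x = 0 := by
  intro D
  induction D with
  | zero =>
      intro T hT S hS
      cases T with
      | leaf r =>
          have hne : S.Nonempty := Finset.card_pos.mp hS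
          simp only [DTree.eval]
          rw [← Finset.mul_sum, sum_chi hne, mul_zero]
      | node i t f => simp [DTree.depth] at hT
  | succ D ih =>
      intro T hT S hS
      cases T with
      | leaf r =>
          have hne : S.Nonempty := Finset.card_pos.mp (by omega)
          simp only [DTree.eval]
          rw [← Finset.mul_sum, sum_chi hne, mul_zero]
      | node i t f =>
          set G : (Fin n → Bool) → ℝ := fun x => (DTree.node i t f).eval x * chi S x with hG
          have hdept : t.depth ≤ D := by simp [DTree.depth] at hT; omega
          have hdepf : f.depth ≤ D := by simp [DTree.depth] at hT; omega
          -- sum over fixed bit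
          have hb : ∀ b : Bool, ∑ x : Fin n → Bool, G (Function.update x i b) = 0 := by
            intro b
            have hcard : D < (S.erase i).card := by
              have := Finset.pred_card_le_card_erase (a := i) (s := S); omega
            have hbranch :
                ∑ x : Fin n → Bool,
                  ((if b then t else f).restrict i b).eval x * chi (S.erase i) x = 0 :=
              ih _ (le_trans (DTree.restrict_depth _ _ _)
                (by cases b <;> simpa)) _ hcard
            have hGu : ∀ x : Fin n → Bool, G (Function.update x i b) =
                (if i ∈ S then (if b then (1:ℝ) else -1) else 1) *
                  (((if b then t else f).restrict i b).eval x * chi (S.erase i) x) := by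
              intro x
              simp only [hG, DTree.eval, Function.update_self]
              rw [DTree.restrict_eval]
              by_cases hiS : i ∈ S
              · rw [chi_erase hiS (Function.update x i b),
                  chi_update_notMem (Finset.notMem_erase i S)]
                simp only [Function.update_self, hiS, if_true]
                cases b <;> simp <;> ring
              · rw [chi_update_notMem hiS, Finset.erase_eq_of_notMem hiS]
                simp only [hiS, if_false, one_mul]
                cases b <;> simp
            rw [Finset.sum_congr rfl fun x _ => hGu x, ← Finset.mul_sum, hbranch, mul_zero]
          -- pairing
          have hinv : Function.Involutive (fun x : Fin n → Bool => Function.update x i (!x i)) := by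
            intro x; funext j
            by_cases hj : j = i
            · subst hj; simp
            · simp [Function.update_of_ne hj]
          have hpair : ∀ x : Fin n → Bool,
              G x + G (Function.update x i (!x i)) =
              G (Function.update x i true) + G (Function.update x i false) := by
            intro x
            cases hxi : x i
            · have h1 : Function.update x i false = x := by
                rw [← hxi]; exact Function.update_eq_self i x
              simp only [Bool.not_false, h1]; ring
            · have h1 : Function.update x i true = x := by
                rw [← hxi]; exact Function.update_eq_self i x
              simp only [Bool.not_true, h1]
          have hflip : (∑ x : Fin n → Bool, G (Function.update x i (!x i)))
              = ∑ x : Fin n → Bool, G x := by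
            simpa using Equiv.sum_comp hinv.toPerm G
          have h2 : 2 * ∑ x : Fin n → Bool, G x = 0 := by
            have heq : 2 * ∑ x : Fin n → Bool, G x
                = ∑ x : Fin n → Bool, (G x + G (Function.update x i (!x i))) := by
              rw [Finset.sum_add_distrib, hflip]; ring
            rw [heq]
            calc ∑ x : Fin n → Bool, (G x + G (Function.update x i (!x i)))
                = ∑ x : Fin n → Bool,
                    (G (Function.update x i true) + G (Function.update x i false)) :=
                  Finset.sum_congr rfl fun x _ => hpair x
              _ = 0 := by rw [Finset.sum_add_distrib, hb true, hb false, add_zero]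
          linarith

/-- If f is computed by a decision tree of depth at most d, then all Fourier
coefficients of degree greater than d vanish. -/
theorem decision_tree_fourier_degree {n d : ℕ} (f : (Fin n → Bool) → ℝ)
    (T : DTree n) (hdepth : T.depth ≤ d) (hcomp : ∀ x, f x = T.eval x) :
    ∀ S : Finset (Fin n), d < S.card → fourierCoef f S = 0 := by
  intro S hS
  unfold fourierCoef
  rw [Finset.sum_congr rfl fun x _ => by rw [hcomp x]]
  rw [key d T hdepth S hS, zero_div]
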